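/- The product 𝔸 × 2^ω of the double arrow space with the Cantor set is not countable dense homogeneous. -/

import Mathlib

open Set Topology

def DoubleArrow : Type :=
  {p : ℝ ×ₗ Bool // ((ofLex p).2 = false ∧ (ofLex p).1 ∈ Set.Ioc (0:ℝ) 1) ∨
    ((ofLex p).2 = true ∧ (ofLex p).1 ∈ Set.Ico (0:ℝ) 1)}

noncomputable instance : LinearOrder DoubleArrow := Subtype.instLinearOrder _
noncomputable instance : TopologicalSpace DoubleArrow := Preorder.topology DoubleArrow
instance : OrderTopology DoubleArrow := ⟨rfl⟩

/-- Countable dense homogeneity. -/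
def CDH (X : Type*) [TopologicalSpace X] : Prop :=
  ∀ D E : Set X, D.Countable → Dense D → E.Countable → Dense E →
    ∃ h : X ≃ₜ X, h '' D = E

/-! ### Basic API for the double arrow space -/

private lemma bool_aux1 : ∀ b : Bool, (b ≤ false ↔ b < true) := by decide
private lemma bool_aux2 : ∀ b : Bool, (true ≤ b ↔ false < b) := by decide

namespace DoubleArrow

def fst (x : DoubleArrow) : ℝ := (ofLex x.1).1
def snd (x : DoubleArrow) : Bool := (ofLex x.1).2

lemma mem_cases (x : DoubleArrow) :
    (x.snd = false ∧ x.fst ∈ Set.Ioc (0:ℝ) 1) ∨ (x.snd = true ∧ x.fst ∈ Set.Ico (0:ℝ) 1) := x.2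

lemma fst_nonneg (x : DoubleArrow) : 0 ≤ x.fst := by
  rcases x.2 with ⟨_, h⟩ | ⟨_, h⟩
  · exact le_of_lt h.1
  · exact h.1

lemma fst_le_one (x : DoubleArrow) : x.fst ≤ 1 := by
  rcases x.2 with ⟨_, h⟩ | ⟨_, h⟩
  · exact h.2
  · exact le_of_lt h.2

lemma lt_iff (x y : DoubleArrow) :
    x < y ↔ x.fst < y.fst ∨ (x.fst = y.fst ∧ x.snd < y.snd) := by
  change x.1 < y.1 ↔ _
  have h1 : (x.1 : ℝ ×ₗ Bool) = toLex (ofLex x.1) := rfl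
  have h2 : (y.1 : ℝ ×ₗ Bool) = toLex (ofLex y.1) := rfl
  rw [h1, h2, Prod.Lex.lt_iff]
  rfl

lemma le_iff (x y : DoubleArrow) :
    x ≤ y ↔ x.fst < y.fst ∨ (x.fst = y.fst ∧ x.snd ≤ y.snd) := by
  change x.1 ≤ y.1 ↔ _
  have h1 : (x.1 : ℝ ×ₗ Bool) = toLex (ofLex x.1) := rfl
  have h2 : (y.1 : ℝ ×ₗ Bool) = toLex (ofLex y.1) := rfl
  rw [h1, h2, Prod.Lex.le_iff]
  rfl

lemma ext {x y : DoubleArrow} (h1 : x.fst = y.fst) (h2 : x.snd = y.snd) : x = y := by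
  apply Subtype.ext
  have : ofLex x.1 = ofLex y.1 := Prod.ext h1 h2
  exact congrArg toLex this

def lo (t : ℝ) (ht : t ∈ Set.Ioc (0:ℝ) 1) : DoubleArrow := ⟨toLex (t, false), Or.inl ⟨rfl, ht⟩⟩
def hi (t : ℝ) (ht : t ∈ Set.Ico (0:ℝ) 1) : DoubleArrow := ⟨toLex (t, true), Or.inr ⟨rfl, ht⟩⟩

@[simp] lemma lo_fst (t ht) : (lo t ht).fst = t := rfl
@[simp] lemma lo_snd (t ht) : (lo t ht).snd = false := rfl
@[simp] lemma hi_fst (t ht) : (hi t ht).fst = t := rfl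
@[simp] lemma hi_snd (t ht) : (hi t ht).snd = true := rfl

lemma lt_of_fst_lt {x y : DoubleArrow} (h : x.fst < y.fst) : x < y := (lt_iff x y).2 (Or.inl h)

lemma le_of_fst_lt {x y : DoubleArrow} (h : x.fst < y.fst) : x ≤ y := le_of_lt (lt_of_fst_lt h)

lemma fst_le_of_le {x y : DoubleArrow} (h : x ≤ y) : x.fst ≤ y.fst := by
  rcases (le_iff x y).1 h with h | ⟨h, _⟩
  · exact le_of_lt h
  · exact le_of_eq h

/-- If `x` is a lower point and `l < x` then `l.fst < x.fst`. -/
lemma fst_lt_of_lt_lo {l x : DoubleArrow} (hx : x.snd = false) (h : l < x) : l.fst < x.fst := by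
  rcases (lt_iff l x).1 h with h | ⟨_, hs⟩
  · exact h
  · exfalso; rw [hx, Bool.lt_iff] at hs; exact Bool.noConfusion hs.2

/-- If `x` is an upper point and `x < u` then `x.fst < u.fst`. -/
lemma fst_lt_of_hi_lt {x u : DoubleArrow} (hx : x.snd = true) (h : x < u) : x.fst < u.fst := by
  rcases (lt_iff x u).1 h with h | ⟨heq, hs⟩
  · exact h
  · exfalso; rw [hx, Bool.lt_iff] at hs; exact Bool.noConfusion hs.1

/-- `Iic` of a lower point is clopen. -/
lemma isClopen_Iic_lo {x : DoubleArrow} (hx : x.snd = false) : IsClopen (Iic x) := by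
  refine ⟨isClosed_Iic, ?_⟩
  rcases eq_or_lt_of_le x.fst_le_one with h1 | h1
  · -- x.fst = 1 : Iic x = univ
    have : Iic x = univ := by
      ext z
      simp only [mem_Iic, mem_univ, iff_true]
      rw [le_iff]
      rcases lt_or_eq_of_le (le_trans z.fst_le_one h1.ge) with hz | hz
      · exact Or.inl hz
      · refine Or.inr ⟨hz, ?_⟩
        rcases z.mem_cases with ⟨hs, _⟩ | ⟨_, hmem⟩
        · rw [hs, hx]
        · exfalso
          have h2 : z.fst < 1 := hmem.2
          rw [hz, h1] at h2
          exact lt_irrefl _ h2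
    rw [this]; exact isOpen_univ
  · -- x.fst < 1 : Iic x = Iio (hi x.fst)
    have hmem' : x.fst ∈ Ico (0:ℝ) 1 := ⟨x.fst_nonneg, h1⟩
    have : Iic x = Iio (hi x.fst hmem') := by
      ext z
      simp only [mem_Iic, mem_Iio]
      rw [le_iff, lt_iff, hx]
      simp only [hi_fst, hi_snd]
      exact or_congr Iff.rfl (and_congr Iff.rfl (bool_aux1 z.snd))
    rw [this]; exact isOpen_Iio

/-- `Ici` of an upper point is clopen. -/
lemma isClopen_Ici_hi {x : DoubleArrow} (hx : x.snd = true) : IsClopen (Ici x) := by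
  refine ⟨isClosed_Ici, ?_⟩
  rcases eq_or_lt_of_le x.fst_nonneg with h1 | h1
  · -- x.fst = 0 : Ici x = univ
    have : Ici x = univ := by
      ext z
      simp only [mem_Ici, mem_univ, iff_true]
      rw [le_iff]
      rcases lt_or_eq_of_le (le_trans h1.ge z.fst_nonneg) with hz | hz
      · exact Or.inl hz
      · refine Or.inr ⟨hz, ?_⟩
        rw [hx]
        rcases z.mem_cases with ⟨_, hmem⟩ | ⟨hs, _⟩
        · exfalso
          have h2 : (0:ℝ) < z.fst := hmem.1
          rw [← hz, ← h1] at h2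
          exact lt_irrefl _ h2
        · rw [hs]
    rw [this]; exact isOpen_univ
  · -- 0 < x.fst : Ici x = Ioi (lo x.fst)
    have hmem' : x.fst ∈ Ioc (0:ℝ) 1 := ⟨h1, x.fst_le_one⟩
    have : Ici x = Ioi (lo x.fst hmem') := by
      ext z
      simp only [mem_Ici, mem_Ioi]
      rw [le_iff x z, lt_iff (lo x.fst hmem') z, hx]
      simp only [lo_fst, lo_snd]
      exact or_congr Iff.rfl (and_congr Iff.rfl (bool_aux2 z.snd))
    rw [this]; exact isOpen_Ioi

/-! ### A countable dense set of "rational" points -/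

def Drat : Set DoubleArrow := {x | ∃ q : ℚ, x.fst = (q:ℝ)}

lemma countable_Drat : Drat.Countable := by
  rw [← Set.countable_coe_iff]
  have h : ∀ x : Drat, ∃ q : ℚ, (x:DoubleArrow).fst = (q:ℝ) := fun x => x.2
  choose f hf using h
  have hinj : Function.Injective (fun x : Drat => (f x, (x:DoubleArrow).snd)) := by
    intro a b hab
    simp only [Prod.mk.injEq] at hab
    apply Subtype.ext
    apply DoubleArrow.ext
    · rw [hf a, hf b, hab.1]
    · exact hab.2
  exact hinj.countable

lemma dense_Drat : Dense Drat := by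
  intro x
  rw [mem_closure_iff_nhds]
  intro U hU
  rcases x.mem_cases with ⟨hsnd, hmem⟩ | ⟨hsnd, hmem⟩
  · -- x lower, x.fst ∈ (0,1]
    obtain ⟨q0, hq01, hq02⟩ := exists_rat_btwn hmem.1
    have hq0m : (q0:ℝ) ∈ Ioc (0:ℝ) 1 := ⟨hq01, le_of_lt (lt_of_lt_of_le hq02 hmem.2)⟩
    have hbelow : ∃ l, l < x := ⟨lo q0 hq0m, lt_of_fst_lt (by simpa using hq02)⟩
    obtain ⟨l, hl, hsub⟩ := exists_Ioc_subset_of_mem_nhds hU hbelow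
    have hlf : l.fst < x.fst := fst_lt_of_lt_lo hsnd hl
    obtain ⟨q, hq1, hq2⟩ := exists_rat_btwn hlf
    have hqm : (q:ℝ) ∈ Ico (0:ℝ) 1 :=
      ⟨le_trans l.fst_nonneg hq1.le, lt_of_lt_of_le hq2 hmem.2⟩
    refine ⟨hi q hqm, hsub ⟨?_, ?_⟩, ⟨q, rfl⟩⟩
    · exact lt_of_fst_lt (by simpa using hq1)
    · exact le_of_fst_lt (by simpa using hq2)
  · -- x upper, x.fst ∈ [0,1)
    obtain ⟨q0, hq01, hq02⟩ := exists_rat_btwn hmem.2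
    have hq0m : (q0:ℝ) ∈ Ioc (0:ℝ) 1 := ⟨lt_of_le_of_lt hmem.1 hq01, hq02.le⟩
    have habove : ∃ u, x < u := ⟨lo q0 hq0m, lt_of_fst_lt (by simpa using hq01)⟩
    obtain ⟨u, hu, hsub⟩ := exists_Ico_subset_of_mem_nhds hU habove
    have huf : x.fst < u.fst := fst_lt_of_hi_lt hsnd hu
    obtain ⟨q, hq1, hq2⟩ := exists_rat_btwn huf
    have hqm : (q:ℝ) ∈ Ioc (0:ℝ) 1 :=
      ⟨lt_of_le_of_lt hmem.1 hq1, le_trans hq2.le u.fst_le_one⟩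
    refine ⟨lo q hqm, hsub ⟨?_, ?_⟩, ⟨q, rfl⟩⟩
    · exact le_of_fst_lt (by simpa using hq1)
    · exact lt_of_fst_lt (by simpa using hq2)

/-! ### A countable π-base for the double arrow space -/

/-- Every nonempty open set contains a "rational interval" of the form
`{z | p < z.fst < q}`. -/
lemma pibase {U : Set DoubleArrow} (hU : IsOpen U) {x : DoubleArrow} (hx : x ∈ U) :
    ∃ p q : ℚ, 0 ≤ p ∧ p < q ∧ q ≤ 1 ∧
      {z : DoubleArrow | (p:ℝ) < z.fst ∧ z.fst < (q:ℝ)} ⊆ U := by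
  have hU' : U ∈ 𝓝 x := hU.mem_nhds hx
  rcases x.mem_cases with ⟨hsnd, hmem⟩ | ⟨hsnd, hmem⟩
  · -- lower point
    obtain ⟨q0, hq01, hq02⟩ := exists_rat_btwn hmem.1
    have hq0m : (q0:ℝ) ∈ Ioc (0:ℝ) 1 := ⟨hq01, le_of_lt (lt_of_lt_of_le hq02 hmem.2)⟩
    have hbelow : ∃ l, l < x := ⟨lo q0 hq0m, lt_of_fst_lt (by simpa using hq02)⟩
    obtain ⟨l, hl, hsub⟩ := exists_Ioc_subset_of_mem_nhds hU' hbelow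
    have hlf : l.fst < x.fst := fst_lt_of_lt_lo hsnd hl
    obtain ⟨p, hp1, hp2⟩ := exists_rat_btwn hlf
    obtain ⟨q, hq1, hq2⟩ := exists_rat_btwn hp2
    refine ⟨p, q, ?_, ?_, ?_, ?_⟩
    · exact_mod_cast le_trans l.fst_nonneg hp1.le
    · exact_mod_cast hq1
    · exact_mod_cast le_trans hq2.le hmem.2
    · intro z hz
      apply hsub
      constructor
      · exact lt_of_fst_lt (lt_trans hp1 hz.1)
      · exact le_of_fst_lt (lt_trans hz.2 hq2)
  · -- upper point
    obtain ⟨q0, hq01, hq02⟩ := exists_rat_btwn hmem.2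
    have hq0m : (q0:ℝ) ∈ Ioc (0:ℝ) 1 := ⟨lt_of_le_of_lt hmem.1 hq01, hq02.le⟩
    have habove : ∃ u, x < u := ⟨lo q0 hq0m, lt_of_fst_lt (by simpa using hq01)⟩
    obtain ⟨u, hu, hsub⟩ := exists_Ico_subset_of_mem_nhds hU' habove
    have huf : x.fst < u.fst := fst_lt_of_hi_lt hsnd hu
    obtain ⟨p, hp1, hp2⟩ := exists_rat_btwn huf
    obtain ⟨q, hq1, hq2⟩ := exists_rat_btwn hp2
    refine ⟨p, q, ?_, ?_, ?_, ?_⟩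
    · exact_mod_cast le_trans x.fst_nonneg hp1.le
    · exact_mod_cast hq1
    · exact_mod_cast le_trans hq2.le u.fst_le_one
    · intro z hz
      apply hsub
      constructor
      · exact le_of_fst_lt (lt_trans hp1 hz.1)
      · exact lt_of_fst_lt (lt_trans hz.2 hq2)

end DoubleArrow

/-! ### The Cantor space: cylinders and clopen sets -/

namespace CantorAux

abbrev C := ℕ → Bool

def cyl (x : C) (N : ℕ) : Set C := {y | ∀ i < N, y i = x i}

lemma self_mem_cyl (x : C) (N : ℕ) : x ∈ cyl x N := fun _ _ => rfl

lemma cyl_mono {x : C} {N M : ℕ} (h : N ≤ M) : cyl x M ⊆ cyl x N :=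
  fun _ hy i hi => hy i (lt_of_lt_of_le hi h)

lemma isOpen_cyl (x : C) (N : ℕ) : IsOpen (cyl x N) := by
  have h : cyl x N = ⋂ i : Fin N, (fun y : C => y i) ⁻¹' {x i} := by
    ext y
    simp only [cyl, mem_setOf_eq, mem_iInter, mem_preimage, mem_singleton_iff]
    exact ⟨fun h i => h i i.2, fun h i hi => h ⟨i, hi⟩⟩
  rw [h]
  exact isOpen_iInter_of_finite fun i =>
    (continuous_apply (i:ℕ)).isOpen_preimage _ (isOpen_discrete _)

lemma exists_cyl_subset {s : Set C} (hs : IsOpen s) {x : C} (hx : x ∈ s) :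
    ∃ N, cyl x N ⊆ s := by
  have h : s ∈ 𝓝 x := hs.mem_nhds hx
  rw [nhds_pi, Filter.mem_pi] at h
  obtain ⟨I, hIfin, t, ht, hsub⟩ := h
  have hxt : ∀ i, x i ∈ t i := fun i => mem_of_mem_nhds (ht i)
  obtain ⟨N, hN⟩ : ∃ N : ℕ, ∀ i ∈ I, i < N := by
    refine ⟨hIfin.toFinset.sup id + 1, fun i hi => Nat.lt_succ_of_le ?_⟩
    exact Finset.le_sup (f := id) (by simpa using hi)
  refine ⟨N, fun y hy => hsub ?_⟩
  rw [Set.mem_pi]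
  intro i hi
  rw [hy i (hN i hi)]
  exact hxt i

lemma clopen_determined {s : Set C} (hs : IsClopen s) :
    ∃ N, ∀ x ∈ s, ∀ y : C, (∀ i < N, y i = x i) → y ∈ s := by
  have hcomp : IsCompact s := hs.isClosed.isCompact
  have h : ∀ x : s, ∃ N, cyl (x:C) N ⊆ s := fun x => exists_cyl_subset hs.isOpen x.2
  choose N hN using h
  have hcover : s ⊆ ⋃ x : s, cyl (x:C) (N x) := fun x hx =>
    mem_iUnion.2 ⟨⟨x, hx⟩, self_mem_cyl _ _⟩
  obtain ⟨F, hF⟩ := hcomp.elim_finite_subcover (fun x : s => cyl (x:C) (N x))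
    (fun x => isOpen_cyl _ _) hcover
  refine ⟨F.sup N, ?_⟩
  intro x hx y hy
  have hx' := hF hx
  rw [mem_iUnion] at hx'
  obtain ⟨x0, hx0⟩ := hx'
  rw [mem_iUnion] at hx0
  obtain ⟨hx0F, hxcyl⟩ := hx0
  have hycyl : y ∈ cyl (x0:C) (N x0) := by
    intro i hi
    rw [hy i (lt_of_lt_of_le hi (Finset.le_sup hx0F)), hxcyl i hi]
  exact hN x0 hycyl

def recon (p : Σ n : ℕ, Set (Fin n → Bool)) : Set C :=
  {y | (fun i : Fin p.1 => y (i:ℕ)) ∈ p.2}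

lemma countable_clopens : Countable {s : Set C // IsClopen s} := by
  choose N hN using fun s : {s : Set C // IsClopen s} => clopen_determined s.2
  set f : {s : Set C // IsClopen s} → Σ n : ℕ, Set (Fin n → Bool) :=
    fun s => ⟨N s, {v : Fin (N s) → Bool | ∃ y ∈ s.1, ∀ i : Fin (N s), y (i:ℕ) = v i}⟩ with hf
  have hrecon : ∀ s, recon (f s) = s.1 := by
    intro s
    ext y
    simp only [recon, hf, mem_setOf_eq]
    constructor
    · rintro ⟨y', hy', hagree⟩
      exact hN s y' hy' y (fun i hi => (hagree ⟨i, hi⟩).symm)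
    · intro hy
      exact ⟨y, hy, fun i => rfl⟩
  have hinj : Function.Injective f := by
    intro s1 s2 h
    apply Subtype.ext
    rw [← hrecon s1, ← hrecon s2, h]
  exact hinj.countable

end CantorAux

/-! ### Continuous maps from the Cantor space to the double arrow space have
countable range -/

open CantorAux in
lemma countable_range_toDA (f : C → DoubleArrow) (hf : Continuous f) :
    (Set.range f).Countable := by
  haveI := countable_clopens
  set Lo : Set DoubleArrow := {x | x ∈ Set.range f ∧ x.snd = false} with hLo
  set Up : Set DoubleArrow := {x | x ∈ Set.range f ∧ x.snd = true} with hUp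
  have hLoC : Lo.Countable := by
    rw [← Set.countable_coe_iff]
    set G : Lo → {s : Set C // IsClopen s} := fun x =>
      ⟨f ⁻¹' (Iic (x:DoubleArrow)), (DoubleArrow.isClopen_Iic_lo x.2.2).preimage hf⟩ with hG
    have hGinj : Function.Injective G := by
      intro a b hab
      have hset : f ⁻¹' (Iic (a:DoubleArrow)) = f ⁻¹' (Iic (b:DoubleArrow)) :=
        congrArg Subtype.val hab
      by_contra hne
      have hne' : (a:DoubleArrow) ≠ (b:DoubleArrow) :=
        fun h => hne (Subtype.ext h)
      rcases hne'.lt_or_gt with h | h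
      · obtain ⟨z, hz⟩ := b.2.1
        have hzb : z ∈ f ⁻¹' (Iic (b:DoubleArrow)) := by
          simp [Set.mem_preimage, hz]
        rw [← hset] at hzb
        simp only [Set.mem_preimage, Set.mem_Iic, hz] at hzb
        exact absurd hzb (not_le_of_gt h)
      · obtain ⟨z, hz⟩ := a.2.1
        have hza : z ∈ f ⁻¹' (Iic (a:DoubleArrow)) := by
          simp [Set.mem_preimage, hz]
        rw [hset] at hza
        simp only [Set.mem_preimage, Set.mem_Iic, hz] at hza
        exact absurd hza (not_le_of_gt h)
    exact hGinj.countable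
  have hUpC : Up.Countable := by
    rw [← Set.countable_coe_iff]
    set G : Up → {s : Set C // IsClopen s} := fun x =>
      ⟨f ⁻¹' (Ici (x:DoubleArrow)), (DoubleArrow.isClopen_Ici_hi x.2.2).preimage hf⟩ with hG
    have hGinj : Function.Injective G := by
      intro a b hab
      have hset : f ⁻¹' (Ici (a:DoubleArrow)) = f ⁻¹' (Ici (b:DoubleArrow)) :=
        congrArg Subtype.val hab
      by_contra hne
      have hne' : (a:DoubleArrow) ≠ (b:DoubleArrow) :=
        fun h => hne (Subtype.ext h)
      rcases hne'.lt_or_gt with h | h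
      · obtain ⟨z, hz⟩ := a.2.1
        have hza : z ∈ f ⁻¹' (Ici (a:DoubleArrow)) := by
          simp [Set.mem_preimage, hz]
        rw [hset] at hza
        simp only [Set.mem_preimage, Set.mem_Ici, hz] at hza
        exact absurd hza (not_le_of_gt h)
      · obtain ⟨z, hz⟩ := b.2.1
        have hzb : z ∈ f ⁻¹' (Ici (b:DoubleArrow)) := by
          simp [Set.mem_preimage, hz]
        rw [← hset] at hzb
        simp only [Set.mem_preimage, Set.mem_Ici, hz] at hzb
        exact absurd hzb (not_le_of_gt h)
    exact hGinj.countable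
  have hsub : Set.range f ⊆ Lo ∪ Up := by
    intro x hx
    rcases Bool.eq_false_or_eq_true x.snd with h | h
    · exact Or.inr ⟨hx, h⟩
    · exact Or.inl ⟨hx, h⟩
  exact (hLoC.union hUpC).mono hsub

/-! ### A countable dense set in the product meeting each fiber at most once -/

lemma exists_good_E : ∃ E : Set (DoubleArrow × (ℕ → Bool)), E.Countable ∧ Dense E ∧
    ∀ e1 ∈ E, ∀ e2 ∈ E, (e1 : DoubleArrow × (ℕ → Bool)).1 = e2.1 → e1 = e2 := by
  classical
  obtain ⟨B, hBc, hBne, hBbasis⟩ := TopologicalSpace.exists_countable_basis (ℕ → Bool)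
  haveI : Countable B := hBc.to_subtype
  let J := ({pq : ℚ × ℚ // 0 ≤ pq.1 ∧ pq.1 < pq.2 ∧ pq.2 ≤ 1}) × B
  haveI : Countable J := inferInstance
  obtain ⟨ι, hι⟩ := exists_injective_nat J
  -- coordinates
  let P : J → ℚ := fun j => j.1.1.1
  let Qq : J → ℚ := fun j => j.1.1.2
  let c : J → ℝ := fun j => ((ι j : ℝ) + 1) * Real.sqrt 2
  have hPQ : ∀ j : J, ((P j : ℝ) - c j) < ((Qq j : ℝ) - c j) := by
    intro j
    have : (P j : ℝ) < (Qq j : ℝ) := by exact_mod_cast j.1.2.2.1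
    linarith
  choose r hr1 hr2 using fun j => exists_rat_btwn (hPQ j)
  let t : J → ℝ := fun j => (r j : ℝ) + c j
  have ht1 : ∀ j, (P j : ℝ) < t j := by intro j; have := hr1 j; simp only [t]; linarith
  have ht2 : ∀ j, t j < (Qq j : ℝ) := by intro j; have := hr2 j; simp only [t]; linarith
  have htm : ∀ j, t j ∈ Ioc (0:ℝ) 1 := by
    intro j
    constructor
    · have h0 : (0:ℝ) ≤ (P j : ℝ) := by exact_mod_cast j.1.2.1
      exact lt_of_le_of_lt h0 (ht1 j)
    · have h1 : ((Qq j : ℝ)) ≤ 1 := by exact_mod_cast j.1.2.2.2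
      exact le_trans (ht2 j).le h1
  let x : J → DoubleArrow := fun j => DoubleArrow.lo (t j) (htm j)
  have hyex : ∀ j : J, ∃ y : ℕ → Bool, y ∈ (j.2 : Set (ℕ → Bool)) := by
    intro j
    rcases Set.eq_empty_or_nonempty (j.2 : Set (ℕ → Bool)) with h | h
    · exact absurd (h ▸ j.2.2) hBne
    · exact h
  choose y hy using hyex
  refine ⟨Set.range (fun j => (x j, y j)), Set.countable_range _, ?_, ?_⟩
  · -- dense
    rw [dense_iff_inter_open]
    intro U hUopen hUne
    obtain ⟨⟨x1, x2⟩, hxU⟩ := hUne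
    obtain ⟨u, v, hu, hv, hx1u, hx2v, huv⟩ := isOpen_prod_iff.1 hUopen x1 x2 hxU
    obtain ⟨V, hVB, hx2V, hVv⟩ := hBbasis.exists_subset_of_mem_open hx2v hv
    obtain ⟨p, q, hp0, hpq, hq1, hmid⟩ := DoubleArrow.pibase hu hx1u
    set j : J := (⟨(p, q), hp0, hpq, hq1⟩, ⟨V, hVB⟩) with hj
    refine ⟨(x j, y j), huv ⟨?_, ?_⟩, Set.mem_range_self j⟩
    · apply hmid
      constructor
      · exact ht1 j
      · exact ht2 j
    · exact hVv (hy j)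
  · -- at most one point in each fiber
    rintro e1 ⟨j1, rfl⟩ e2 ⟨j2, rfl⟩ hfst
    have htt : t j1 = t j2 := by
      have := congrArg DoubleArrow.fst hfst
      exact this
    have hιeq : ι j1 = ι j2 := by
      by_contra hne
      have h2 : (r j1 : ℝ) + ((ι j1 : ℝ) + 1) * Real.sqrt 2
          = (r j2 : ℝ) + ((ι j2 : ℝ) + 1) * Real.sqrt 2 := htt
      have hd : ((ι j1 : ℝ) - (ι j2 : ℝ)) * Real.sqrt 2 = (r j2 : ℝ) - (r j1 : ℝ) := by
        ring_nf
        nlinarith [h2]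
      set d : ℚ := (ι j1 : ℚ) - (ι j2 : ℚ) with hdq
      have hdne : d ≠ 0 := by
        simp only [hdq, sub_ne_zero]
        exact_mod_cast hne
      have hirr : Irrational ((d : ℝ) * Real.sqrt 2) :=
        irrational_sqrt_two.ratCast_mul hdne
      have hcast : ((d : ℝ)) = (ι j1 : ℝ) - (ι j2 : ℝ) := by push_cast [hdq]; ring
      rw [hcast, hd] at hirr
      have : ((r j2 - r j1 : ℚ) : ℝ) = (r j2 : ℝ) - (r j1 : ℝ) := by push_cast; ring
      exact hirr ⟨r j2 - r j1, this⟩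
    have : j1 = j2 := hι hιeq
    rw [this]

/-! ### Main theorem -/

theorem doubleArrow_prod_cantor_not_CDH : ¬ CDH (DoubleArrow × (ℕ → Bool)) := by
  intro hcdh
  classical
  obtain ⟨Q, hQc, hQd⟩ := TopologicalSpace.exists_countable_dense (ℕ → Bool)
  obtain ⟨E, hEc, hEd, hEinj⟩ := exists_good_E
  have hhalf : (1/2 : ℝ) ∈ Ioc (0:ℝ) 1 := by norm_num
  set a : DoubleArrow := DoubleArrow.lo (1/2) hhalf with ha
  have haD : a ∈ DoubleArrow.Drat := ⟨(1:ℚ)/2, by push_cast; simp [ha]⟩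
  have hDc : (DoubleArrow.Drat ×ˢ Q).Countable := DoubleArrow.countable_Drat.prod hQc
  have hDd : Dense (DoubleArrow.Drat ×ˢ Q) := DoubleArrow.dense_Drat.prod hQd
  obtain ⟨h, hh⟩ := hcdh _ E hDc hDd hEc hEd
  set φ : (ℕ → Bool) → DoubleArrow := fun z => (h (a, z)).1 with hφdef
  have hφ : Continuous φ := continuous_fst.comp (h.continuous.comp (Continuous.prodMk_right a))
  have hS : (Set.range φ).Countable := countable_range_toDA φ hφ
  haveI := hS.to_subtype
  have hclosed : ∀ b : Set.range φ, IsClosed (φ ⁻¹' {(b : DoubleArrow)}) :=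
    fun b => isClosed_singleton.preimage hφ
  have hcover : ⋃ b : Set.range φ, φ ⁻¹' {(b : DoubleArrow)} = univ := by
    ext z
    simp only [mem_iUnion, mem_preimage, mem_singleton_iff, mem_univ, iff_true]
    exact ⟨⟨φ z, Set.mem_range_self z⟩, rfl⟩
  obtain ⟨b, hbint⟩ := nonempty_interior_of_iUnion_of_closed hclosed hcover
  obtain ⟨y0, hy0⟩ := hbint
  obtain ⟨N, hN⟩ := CantorAux.exists_cyl_subset isOpen_interior hy0
  set y1 : ℕ → Bool := Function.update y0 N (!(y0 N)) with hy1def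
  have hy1cyl : ∀ M ≤ N, y1 ∈ CantorAux.cyl y0 M := by
    intro M hM i hi
    simp only [hy1def, Function.update]
    have : i ≠ N := Nat.ne_of_lt (lt_of_lt_of_le hi hM)
    simp [this]
  obtain ⟨q1, hq1Q, hq1O⟩ := hQd.exists_mem_open (CantorAux.isOpen_cyl y0 (N+1))
    ⟨y0, CantorAux.self_mem_cyl y0 (N+1)⟩
  obtain ⟨q2, hq2Q, hq2O⟩ := hQd.exists_mem_open (CantorAux.isOpen_cyl y1 (N+1))
    ⟨y1, CantorAux.self_mem_cyl y1 (N+1)⟩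
  have hq12 : q1 ≠ q2 := by
    intro hEq
    have h1 : q1 N = y0 N := hq1O N (Nat.lt_succ_self N)
    have h2 : q2 N = y1 N := hq2O N (Nat.lt_succ_self N)
    have h3 : y1 N = !(y0 N) := by simp [hy1def]
    rw [hEq, h2, h3] at h1
    exact (Bool.not_ne_self (y0 N)) h1
  -- both q1 q2 are in the interior piece, hence in the fiber over b
  have hq1b : φ q1 = b := by
    have h1 : q1 ∈ CantorAux.cyl y0 N := CantorAux.cyl_mono (Nat.le_succ N) hq1O
    have hmem : q1 ∈ φ ⁻¹' {(b : DoubleArrow)} := interior_subset (hN h1)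
    simpa using hmem
  have hq2b : φ q2 = b := by
    have hq2' : q2 ∈ CantorAux.cyl y0 N := by
      intro i hi
      rw [hq2O i (lt_trans hi (Nat.lt_succ_self N)), hy1cyl N le_rfl i hi]
    have hmem : q2 ∈ φ ⁻¹' {(b : DoubleArrow)} := interior_subset (hN hq2')
    simpa using hmem
  -- the two image points are distinct points of E in the same fiber
  have he1 : h (a, q1) ∈ E := by
    rw [← hh]
    exact Set.mem_image_of_mem h ⟨haD, hq1Q⟩
  have he2 : h (a, q2) ∈ E := by
    rw [← hh]
    exact Set.mem_image_of_mem h ⟨haD, hq2Q⟩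
  have heq : h (a, q1) = h (a, q2) := by
    apply hEinj _ he1 _ he2
    show φ q1 = φ q2
    rw [hq1b, hq2b]
  have : (a, q1) = (a, q2) := h.injective heq
  exact hq12 (congrArg Prod.snd this)
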